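/- Folkman's theorem: for every finite coloring c : ℕ → C (C finite) and every M ∈ ℕ, there exists a set X of M distinct positive integers such that all nonempty subset sums of X receive the same color. -/

import Mathlib

open Finset

lemma key_sum : ∀ (n : ℕ) (S : Finset ℕ), S.card = n → S.Nonempty → ∀ (a : Stream' ℕ+),
    ∃ m ∈ Hindman.FS a, (m : ℕ) = ∑ i ∈ S, (a.get i : ℕ) := by
  intro n
  induction n with
  | zero => intro S hc hS a; simp [Finset.card_eq_zero.mp hc] at hS
  | succ n ih =>
    intro S hc hS a
    set i := S.min' hS with hi
    set S' := S.erase i with hS'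
    by_cases h : S'.Nonempty
    · set T := S'.image (· - (i+1)) with hT
      have hmem : ∀ j ∈ S', i + 1 ≤ j := by
        intro j hj
        have := S.min'_le j (Finset.mem_of_mem_erase hj)
        have hne := Finset.ne_of_mem_erase hj
        omega
      have hinj : Set.InjOn (· - (i+1)) S' := by
        intro x hx y hy hxy
        have := hmem x hx; have := hmem y hy
        simp only at hxy; omega
      have hTcard : T.card = n := by
        rw [hT, Finset.card_image_of_injOn hinj, hS', Finset.card_erase_of_mem (S.min'_mem hS), hc]
        omega
      obtain ⟨m', hm', hsum'⟩ := ih T hTcard (h.image _) (a.drop (i+1))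
      refine ⟨a.get i + m', ?_, ?_⟩
      · apply Hindman.FS_iter_tail_sub_FS a i
        have h1 : (a.drop i).head = a.get i := Stream'.head_drop a i
        have h2 : (a.drop i).tail = a.drop (i+1) := by
          rw [Stream'.tail_eq_drop, Stream'.drop_drop, Nat.add_comm]
        have := Hindman.FS.cons (a.drop i) m' (by rw [h2]; exact hm')
        rwa [h1] at this
      · have hback : ∑ t ∈ T, ((a.drop (i+1)).get t : ℕ) = ∑ j ∈ S', (a.get j : ℕ) := by
          rw [hT, Finset.sum_image hinj]
          apply Finset.sum_congr rfl
          intro j hj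
          rw [Stream'.get_drop]
          have hj' : j - (i+1) + (i+1) = j := by have := hmem j hj; omega
          rw [Nat.add_comm (i+1) (j - (i+1)), hj']
        have hiS : i ∈ S := S.min'_mem hS
        have : ∑ j ∈ S, (a.get j : ℕ) = (a.get i : ℕ) + ∑ j ∈ S', (a.get j : ℕ) := by
          rw [hS']
          exact (Finset.add_sum_erase S (fun j => ((a.get j : ℕ))) hiS).symm
        rw [this, ← hback, ← hsum', PNat.add_coe]
    · have hSi : S = {i} := by
        apply Finset.eq_singleton_iff_unique_mem.mpr
        refine ⟨S.min'_mem hS, fun x hx => ?_⟩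
        by_contra hne
        have hx' : x ∈ S' := Finset.mem_erase.mpr ⟨hne, hx⟩
        rw [Finset.not_nonempty_iff_eq_empty.mp h] at hx'
        exact absurd hx' (Finset.notMem_empty x)
      refine ⟨a.get i, Hindman.FS.singleton a i, by rw [hSi]; simp⟩

theorem stmt_11 (C : Type) [Finite C] (c : ℕ → C) (M : ℕ) :
    ∃ X : Finset ℕ, X.card = M ∧ (∀ a ∈ X, 0 < a) ∧
      ∃ k : C, ∀ S ⊆ X, S.Nonempty → c (∑ a ∈ S, a) = k := by
  set c' : ℕ+ → C := fun p => c (p : ℕ) with hc'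
  obtain ⟨cs, ⟨k, rfl⟩, a, hFS⟩ := Hindman.exists_FS_of_finite_cover
    (Set.range (fun k : C => c' ⁻¹' {k})) (Set.finite_range _)
    (fun x _ => ⟨c' ⁻¹' {c' x}, ⟨c' x, rfl⟩, rfl⟩)
  -- define block endpoints
  set e : ℕ → ℕ := fun j => Nat.rec 0
    (fun _ ej => ej + 1 + ∑ i ∈ Finset.range ej, (a.get i : ℕ)) j with he
  have he0 : e 0 = 0 := rfl
  have heS : ∀ j, e (j+1) = e j + 1 + ∑ i ∈ Finset.range (e j), (a.get i : ℕ) := fun j => rfl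
  have hemono : Monotone e := monotone_nat_of_le_succ (fun j => by rw [heS]; omega)
  set b : ℕ → ℕ := fun j => ∑ i ∈ Finset.Ico (e j) (e (j+1)), (a.get i : ℕ) with hb
  have hbpos : ∀ j, 0 < b j := by
    intro j
    apply Finset.sum_pos (fun i _ => (a.get i).pos)
    rw [Finset.nonempty_Ico]; rw [heS]; omega
  have hble : ∀ j, b j ≤ ∑ i ∈ Finset.range (e (j+1)), (a.get i : ℕ) := by
    intro j
    apply Finset.sum_le_sum_of_subset
    intro x hx; rw [Finset.mem_range]; exact (Finset.mem_Ico.mp hx).2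
  have hbge : ∀ j, 1 + ∑ i ∈ Finset.range (e j), (a.get i : ℕ) ≤ b j := by
    intro j
    calc 1 + ∑ i ∈ Finset.range (e j), (a.get i : ℕ)
        = (Finset.Ico (e j) (e (j+1))).card := by
          rw [Nat.card_Ico, heS]; omega
      _ = ∑ _i ∈ Finset.Ico (e j) (e (j+1)), 1 := by simp
      _ ≤ b j := Finset.sum_le_sum (fun i _ => (a.get i).pos)
  have hblt : ∀ j j', j < j' → b j < b j' := by
    intro j j' hjj'
    calc b j ≤ ∑ i ∈ Finset.range (e (j+1)), (a.get i : ℕ) := hble j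
      _ ≤ ∑ i ∈ Finset.range (e j'), (a.get i : ℕ) := by
          apply Finset.sum_le_sum_of_subset
          apply Finset.range_subset_range.mpr (hemono hjj')
      _ < b j' := by have := hbge j'; omega
  have hbinj : Function.Injective b := (strictMono_nat_of_lt_succ
    (fun j => hblt j (j+1) (Nat.lt_succ_self j))).injective
  refine ⟨(Finset.range M).image b, ?_, ?_, k, ?_⟩
  · rw [Finset.card_image_of_injective _ hbinj, Finset.card_range]
  · intro x hx
    obtain ⟨j, _, rfl⟩ := Finset.mem_image.mp hx
    exact hbpos j
  · intro S hS hSne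
    set T := (Finset.range M).filter (fun t => b t ∈ S) with hT
    have hST : S = T.image b := by
      ext x
      simp only [hT, Finset.mem_image, Finset.mem_filter]
      constructor
      · intro hx
        obtain ⟨j, hj, rfl⟩ := Finset.mem_image.mp (hS hx)
        exact ⟨j, ⟨hj, hx⟩, rfl⟩
      · rintro ⟨j, ⟨_, hj⟩, rfl⟩; exact hj
    have hTne : T.Nonempty := by
      obtain ⟨x, hx⟩ := hSne
      rw [hST] at hx
      obtain ⟨j, hj, _⟩ := Finset.mem_image.mp hx
      exact ⟨j, hj⟩
    set U := T.biUnion (fun t => Finset.Ico (e t) (e (t+1))) with hU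
    have hsum : ∑ x ∈ S, x = ∑ i ∈ U, (a.get i : ℕ) := by
      rw [hST, Finset.sum_image (fun x _ y _ h => hbinj h), hU,
        Finset.sum_biUnion]
      intro x _ y _ hxy
      apply Finset.disjoint_left.mpr
      intro i hix hiy
      rw [Finset.mem_Ico] at hix hiy
      rcases lt_or_gt_of_ne hxy with h | h
      · have := hemono (show x + 1 ≤ y from h); omega
      · have := hemono (show y + 1 ≤ x from h); omega
    have hUne : U.Nonempty := by
      obtain ⟨t, ht⟩ := hTne
      refine ⟨e t, Finset.mem_biUnion.mpr ⟨t, ht, ?_⟩⟩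
      rw [Finset.mem_Ico]; rw [heS]; omega
    obtain ⟨m, hm, hmsum⟩ := key_sum U.card U rfl hUne a
    have := hFS hm
    rw [hsum, ← hmsum]
    exact this
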